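/- Let u_1,…,u_6 ∈ ℝ³ be arbitrary vectors and define v_i = [u_{i−1}, u_i] for i = 1,…,6 (indices mod 6, so v_1 = [u_6,u_1], v_2 = [u_1,u_2], …, v_6 = [u_5,u_6]). Let Δ_i = ⟨v_i, [v_{i+1}, v_{i+2}]⟩ (indices mod 6). Then Δ_1·Δ_3·Δ_5 = Δ_2·Δ_4·Δ_6. -/

import Mathlib

open Matrix

lemma cross_cross_aux (a b c : Fin 3 → ℝ) :
    (a ⨯₃ b) ⨯₃ (b ⨯₃ c) = (a ⬝ᵥ (b ⨯₃ c)) • b := by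
  ext i
  fin_cases i <;>
    simp [crossProduct, dotProduct, Fin.sum_univ_three] <;> ring

lemma dot_cross_cyc (a b c : Fin 3 → ℝ) :
    a ⬝ᵥ (b ⨯₃ c) = b ⬝ᵥ (c ⨯₃ a) := by
  simp [crossProduct, dotProduct, Fin.sum_univ_three]; ring

lemma cross_dot_aux (a b c : Fin 3 → ℝ) :
    (a ⨯₃ b) ⬝ᵥ c = a ⬝ᵥ (b ⨯₃ c) := by
  simp [crossProduct, dotProduct, Fin.sum_univ_three]; ring

/-- For arbitrary vectors `u₁, …, u₆ ∈ ℝ³`, set `vᵢ = [u_{i-1}, uᵢ]`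
(indices mod 6) and `Δᵢ = ⟨vᵢ, [v_{i+1}, v_{i+2}]⟩` (indices mod 6).  Then
`Δ₁·Δ₃·Δ₅ = Δ₂·Δ₄·Δ₆`. -/
theorem cross_products_determinant_identity (u₁ u₂ u₃ u₄ u₅ u₆ : Fin 3 → ℝ)
    (v₁ v₂ v₃ v₄ v₅ v₆ : Fin 3 → ℝ)
    (hv₁ : v₁ = u₆ ⨯₃ u₁) (hv₂ : v₂ = u₁ ⨯₃ u₂) (hv₃ : v₃ = u₂ ⨯₃ u₃)
    (hv₄ : v₄ = u₃ ⨯₃ u₄) (hv₅ : v₅ = u₄ ⨯₃ u₅) (hv₆ : v₆ = u₅ ⨯₃ u₆)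
    (Δ₁ Δ₂ Δ₃ Δ₄ Δ₅ Δ₆ : ℝ)
    (hΔ₁ : Δ₁ = v₁ ⬝ᵥ (v₂ ⨯₃ v₃))
    (hΔ₂ : Δ₂ = v₂ ⬝ᵥ (v₃ ⨯₃ v₄))
    (hΔ₃ : Δ₃ = v₃ ⬝ᵥ (v₄ ⨯₃ v₅))
    (hΔ₄ : Δ₄ = v₄ ⬝ᵥ (v₅ ⨯₃ v₆))
    (hΔ₅ : Δ₅ = v₅ ⬝ᵥ (v₆ ⨯₃ v₁))
    (hΔ₆ : Δ₆ = v₆ ⬝ᵥ (v₁ ⨯₃ v₂)) :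
    Δ₁ * Δ₃ * Δ₅ = Δ₂ * Δ₄ * Δ₆ := by
  subst hv₁ hv₂ hv₃ hv₄ hv₅ hv₆
  rw [hΔ₁, hΔ₂, hΔ₃, hΔ₄, hΔ₅, hΔ₆,
    cross_cross_aux u₁ u₂ u₃, cross_cross_aux u₂ u₃ u₄, cross_cross_aux u₃ u₄ u₅,
    cross_cross_aux u₄ u₅ u₆, cross_cross_aux u₅ u₆ u₁, cross_cross_aux u₆ u₁ u₂]
  simp only [dotProduct_smul, smul_eq_mul]
  rw [cross_dot_aux u₆ u₁ u₂, cross_dot_aux u₂ u₃ u₄, cross_dot_aux u₄ u₅ u₆,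
    cross_dot_aux u₁ u₂ u₃, cross_dot_aux u₃ u₄ u₅, cross_dot_aux u₅ u₆ u₁]
  ring
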